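/- For any canonical mechanism M(φ, x₁,…,x_{2d+1}) with γ = φ ∧ ⋀_{1≤i≤d} q_{2i}: the mechanism is d-gap-free if and only if the closed quantified Boolean formula ∀x₁ ∃x₂ ∀x₃ … ∃x_{2d} ∀x_{2d+1} φ is true. -/

import Mathlib

/-- A sequential decision-making mechanism has `n` agents acting in order; agent `i`
controls an action block of type `A i` (the Boolean valuations of its variable block),
and the deontic constraint is a predicate `γ` on action profiles.
`Resp γ d i s` says that agent `i` is `d`-order responsible under profile `s`:
`R^d_i = Gap_{d-1} ∧ ∃v_i ∀v_{i+1} … ∀v_n ¬Gap_{d-1}`,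
where `Gap_{d-1} = ¬γ ∧ ⋀_{j≤n} ⋀_{1≤e<d} ¬R^e_j`. -/
def Resp {n : ℕ} {A : Fin n → Type} (γ : (∀ i, A i) → Prop) :
    (d : ℕ) → Fin n → (∀ i, A i) → Prop
  | 0, _, _ => False
  | d+1, i, s =>
    (¬ γ s ∧ ∀ e ≤ d, ∀ j, ¬ Resp γ e j s) ∧
    ∃ t : ∀ i', A i', (∀ j, j < i → t j = s j) ∧
      ∀ u : ∀ i', A i', (∀ j, j ≤ i → u j = t j) →
        ¬ (¬ γ u ∧ ∀ e ≤ d, ∀ j, ¬ Resp γ e j u)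
termination_by d => d
decreasing_by all_goals omega

/-- A mechanism is `d`-gap-free if for every profile violating the deontic constraint
there are `d' ≤ d` and an agent who is `d'`-order responsible. -/
def GapFree {n : ℕ} {A : Fin n → Type} (γ : (∀ i, A i) → Prop) (d : ℕ) : Prop :=
  ∀ s, ¬ γ s → ∃ d' ≤ d, ∃ i, Resp γ d' i s

/-- `AltTrue n A γ k s` : alternating quantification over the remaining blocks
`k, k+1, …, n-1` (a `∀` over block `k` when `k` is even in 0-based counting,
i.e. blocks 1,3,5,… in 1-based counting, and `∃` when `k` is odd), of the
statement that `γ` holds at the resulting profile.  Reading `∀` as Devil's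
moves and `∃` as Moralist's moves, `AltTrue n A γ k s` says that the game node
reached after the first `k` moves recorded in `s` is winning for Moralist. -/
def AltTrue (n : ℕ) (A : Fin n → Type) (γ : (∀ i, A i) → Prop) :
    (k : ℕ) → (∀ i, A i) → Prop :=
  fun k s =>
    if h : k < n then
      if k % 2 = 0 then
        ∀ a : A ⟨k, h⟩, AltTrue n A γ (k+1) (Function.update s ⟨k, h⟩ a)
      else
        ∃ a : A ⟨k, h⟩, AltTrue n A γ (k+1) (Function.update s ⟨k, h⟩ a)
    else γ s
termination_by k => n - k
decreasing_by all_goals omega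

/-- Action block of agent `i` in the canonical mechanism `M(φ, x₁,…,x_{2d+1})`:
the original block `X i`, extended by one fresh Boolean variable `q` exactly when
`i` is even in 1-based counting (odd in 0-based counting); for the other agents the
extension is the empty block `Fin 0 → Bool`. -/
def CanA {d : ℕ} (X : Fin (2*d+1) → Type) (i : Fin (2*d+1)) : Type :=
  X i × (Fin ((i : ℕ) % 2) → Bool)

/-- Deontic constraint of the canonical mechanism: `γ = φ ∧ ⋀_{1≤i≤d} q_{2i}`. -/
def canGamma {d : ℕ} (X : Fin (2*d+1) → Type) (φ : (∀ i, X i) → Prop)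
    (s : ∀ i, CanA X i) : Prop :=
  φ (fun i => (s i).1) ∧ ∀ i, ∀ j, (s i).2 j = true

/-- `s` conforms to the Devil strategy `σ`: every odd-numbered (1-based; even
0-based) block of `s` is the one prescribed by `σ`. -/
def Conform {n : ℕ} {A : Fin n → Type}
    (σ : ∀ i : Fin n, (∀ j, A j) → A i) (s : ∀ i, A i) : Prop :=
  ∀ i : Fin n, (i : ℕ) % 2 = 0 → s i = σ i s

open Classical in
/-- The degree of immorality `‖s‖`: one sin for each fresh variable `q_{2i}`
that is false under `s`, plus one sin if `s` conforms to the Devil strategy `σ`. -/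
noncomputable def immorality {d : ℕ} {X : Fin (2*d+1) → Type}
    (σ : ∀ i : Fin (2*d+1), (∀ j, CanA X j) → CanA X i)
    (s : ∀ i, CanA X i) : ℕ :=
  (Finset.univ.filter (fun i : Fin (2*d+1) => ∃ j, (s i).2 j = false)).card
  + (if Conform σ s then 1 else 0)


lemma resp_zero {n : ℕ} {A : Fin n → Type} {γ : (∀ i, A i) → Prop} {i s} :
    Resp γ 0 i s ↔ False := by rw [Resp]

lemma resp_succ {n : ℕ} {A : Fin n → Type} {γ : (∀ i, A i) → Prop} {f : ℕ} {i : Fin n} {s} :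
    Resp γ (f+1) i s ↔
    ((¬ γ s ∧ ∀ e ≤ f, ∀ j, ¬ Resp γ e j s) ∧
    ∃ t : ∀ i', A i', (∀ j, j < i → t j = s j) ∧
      ∀ u : ∀ i', A i', (∀ j, j ≤ i → u j = t j) →
        ¬ (¬ γ u ∧ ∀ e ≤ f, ∀ j, ¬ Resp γ e j u)) := by
  rw [Resp]
section AltLemmas

variable {n : ℕ} {A : Fin n → Type} {φ : (∀ i, A i) → Prop}

lemma alt_ge {k : ℕ} {x : ∀ i, A i} (h : n ≤ k) : AltTrue n A φ k x ↔ φ x := by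
  rw [AltTrue]; rw [dif_neg (by omega)]

lemma alt_even {k : ℕ} {x : ∀ i, A i} (h : k < n) (h2 : k % 2 = 0) :
    AltTrue n A φ k x ↔ ∀ a : A ⟨k, h⟩, AltTrue n A φ (k+1) (Function.update x ⟨k, h⟩ a) := by
  rw [AltTrue]; rw [dif_pos h, if_pos h2]

lemma alt_odd {k : ℕ} {x : ∀ i, A i} (h : k < n) (h2 : k % 2 = 1) :
    AltTrue n A φ k x ↔ ∃ a : A ⟨k, h⟩, AltTrue n A φ (k+1) (Function.update x ⟨k, h⟩ a) := by
  rw [AltTrue]; rw [dif_pos h, if_neg (by omega)]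

lemma step_even {k : ℕ} {x : ∀ i, A i} (h : k < n) (h2 : k % 2 = 0)
    (hx : AltTrue n A φ k x) : AltTrue n A φ (k+1) x := by
  rw [alt_even h h2] at hx
  have := hx (x ⟨k, h⟩)
  rwa [Function.update_eq_self] at this

lemma step_odd {k : ℕ} {x : ∀ i, A i} (h : k < n) (h2 : k % 2 = 1)
    (hx : ¬ AltTrue n A φ k x) : ¬ AltTrue n A φ (k+1) x := by
  intro hx1
  exact hx ((alt_odd h h2).mpr ⟨x ⟨k, h⟩, by rwa [Function.update_eq_self]⟩)

lemma alt_congr_aux : ∀ (m k : ℕ), n ≤ k + m → ∀ x y : ∀ i, A i,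
    (∀ j : Fin n, (j : ℕ) < k → x j = y j) →
    AltTrue n A φ k x → AltTrue n A φ k y := by
  intro m
  induction m with
  | zero =>
    intro k hk x y hxy hx
    have hxyy : x = y := funext fun j => hxy j (by omega)
    rwa [hxyy] at hx
  | succ m ih =>
    intro k hk x y hxy hx
    by_cases h : k < n
    · have key : ∀ a : A ⟨k, h⟩, AltTrue n A φ (k+1) (Function.update x ⟨k, h⟩ a) →
          AltTrue n A φ (k+1) (Function.update y ⟨k, h⟩ a) := by
        intro a ha
        refine ih (k+1) (by omega) _ _ ?_ ha
        intro j hj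
        by_cases hjk : (j : ℕ) = k
        · have hj' : j = ⟨k, h⟩ := Fin.ext hjk
          subst hj'
          rw [Function.update_self, Function.update_self]
        · rw [Function.update_of_ne (Fin.ne_of_val_ne hjk),
            Function.update_of_ne (Fin.ne_of_val_ne hjk)]
          exact hxy j (by omega)
      by_cases h2 : k % 2 = 0
      · rw [alt_even h h2] at hx ⊢
        exact fun a => key a (hx a)
      · rw [alt_odd h (by omega)] at hx ⊢
        obtain ⟨a, ha⟩ := hx
        exact ⟨a, key a ha⟩
    · rw [alt_ge (by omega)] at hx ⊢
      have hxyy : x = y := funext fun j => hxy j (by omega)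
      rwa [hxyy] at hx

lemma alt_congr {k : ℕ} {x y : ∀ i, A i}
    (hxy : ∀ j : Fin n, (j : ℕ) < k → x j = y j)
    (hx : AltTrue n A φ k x) : AltTrue n A φ k y :=
  alt_congr_aux n k (by omega) x y hxy hx

lemma ext_lemma [∀ i, Nonempty (A i)] : ∀ (m k : ℕ), n ≤ k + m → ∀ x : ∀ i, A i,
    ¬ AltTrue n A φ k x →
    ∃ y, (∀ j : Fin n, (j : ℕ) < k → y j = x j) ∧ ∀ l, k ≤ l → ¬ AltTrue n A φ l y := by
  intro m
  induction m with
  | zero =>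
    intro k hk x hx
    refine ⟨x, fun _ _ => rfl, fun l hl hA => hx ?_⟩
    rw [alt_ge (by omega)] at hA ⊢
    exact hA
  | succ m ih =>
    intro k hk x hx
    by_cases h : k < n
    · have key : ∃ a : A ⟨k, h⟩, ¬ AltTrue n A φ (k+1) (Function.update x ⟨k, h⟩ a) := by
        by_cases h2 : k % 2 = 0
        · rw [alt_even h h2] at hx; push_neg at hx; exact hx
        · rw [alt_odd h (by omega)] at hx; push_neg at hx
          exact ⟨Classical.arbitrary _, hx _⟩
      obtain ⟨a, ha⟩ := key
      obtain ⟨y, hy1, hy2⟩ := ih (k+1) (by omega) _ ha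
      have hyx : ∀ j : Fin n, (j : ℕ) < k → y j = x j := by
        intro j hj
        rw [hy1 j (by omega), Function.update_of_ne (Fin.ne_of_val_ne (show (j:ℕ) ≠ k by omega))]
      refine ⟨y, hyx, ?_⟩
      intro l hl
      rcases eq_or_lt_of_le hl with rfl | hl'
      · intro hA
        exact hx (alt_congr (fun j hj => (hyx j hj)) hA)
      · exact hy2 l hl'
    · refine ⟨x, fun _ _ => rfl, fun l hl hA => hx ?_⟩
      rw [alt_ge (by omega)] at hA ⊢
      exact hA

end AltLemmas

lemma count_sub {d : ℕ} {X : Fin (2*d+1) → Type} (s t u : ∀ i, CanA X i) (j : Fin (2*d+1))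
    (hta : ∀ k, k < j → t k = s k) (hle : ∀ k, k ≤ j → u k = t k)
    (hgt : ∀ k, j < k → ∀ j', (u k).2 j' = false) :
    (Finset.univ.filter (fun i : Fin (2*d+1) => ∃ j0, (s i).2 j0 = false)).erase j ⊆
      Finset.univ.filter (fun i : Fin (2*d+1) => ∃ j0, (u i).2 j0 = false) := by
  intro i hi
  obtain ⟨hne, hmem⟩ := Finset.mem_erase.mp hi
  obtain ⟨-, j0, hj0⟩ := Finset.mem_filter.mp hmem
  rcases lt_or_gt_of_ne hne with h | h
  · refine Finset.mem_filter.mpr ⟨Finset.mem_univ _, ⟨j0, ?_⟩⟩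
    rw [hle i (le_of_lt h), hta i h]; exact hj0
  · exact Finset.mem_filter.mpr ⟨Finset.mem_univ _, ⟨j0, hgt i h j0⟩⟩

lemma dev {d : ℕ} (X : Fin (2*d+1) → Type) (φ : (∀ i, X i) → Prop)
    (p : ℕ) (hp : p < 2*d+1) (hodd : p % 2 = 1) (s : ∀ i, CanA X i)
    (hq : ∀ i : Fin (2*d+1), (i : ℕ) < p → ∀ j', (s i).2 j' = true)
    (hA : AltTrue (2*d+1) X φ p (fun i => (s i).1)) :
    ∃ t : ∀ i', CanA X i', (∀ k, k < (⟨p, hp⟩ : Fin (2*d+1)) → t k = s k) ∧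
      ∀ u : ∀ i', CanA X i', (∀ k, k ≤ (⟨p, hp⟩ : Fin (2*d+1)) → u k = t k) →
        (∀ i : Fin (2*d+1), (i : ℕ) < p + 2 → ∀ j', (u i).2 j' = true) ∧
        AltTrue (2*d+1) X φ (p+2) (fun i => (u i).1) := by
  rw [alt_odd hp hodd] at hA
  obtain ⟨a, ha⟩ := hA
  refine ⟨Function.update s ⟨p, hp⟩ ((a, fun _ => true) : CanA X ⟨p, hp⟩),
    fun k hk => Function.update_of_ne (Fin.ne_of_lt hk) _ _, ?_⟩
  intro u hu
  have huP : u ⟨p, hp⟩ = ((a, fun _ => true) : CanA X ⟨p, hp⟩) := by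
    exact (hu _ le_rfl).trans (Function.update_self _ _ _)
  have hus : ∀ k : Fin (2*d+1), k < ⟨p, hp⟩ → u k = s k := by
    intro k hk
    exact (hu k (le_of_lt hk)).trans (Function.update_of_ne (Fin.ne_of_lt hk) _ _)
  constructor
  · intro i hi j'
    rcases lt_trichotomy (i : ℕ) p with h1 | h1 | h1
    · rw [hus i (Fin.lt_def.mpr (show (i : ℕ) < p from h1))]
      exact hq i h1 j'
    · have hiP : i = ⟨p, hp⟩ := Fin.ext h1
      subst hiP
      rw [huP]
    · exact absurd j'.isLt (by omega)
  · have h1 : AltTrue (2*d+1) X φ (p+1) (fun i => (u i).1) := by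
      refine alt_congr (x := Function.update (fun i => (s i).1) ⟨p, hp⟩ a) ?_ ha
      intro k hk
      by_cases hkP : k = (⟨p, hp⟩ : Fin (2*d+1))
      · subst hkP
        rw [Function.update_self, huP]
      · have hne : (k : ℕ) ≠ p := fun h => hkP (Fin.ext h)
        have hklt : k < (⟨p, hp⟩ : Fin (2*d+1)) :=
          Fin.lt_def.mpr (show (k : ℕ) < p by omega)
        rw [Function.update_of_ne hkP, hus k hklt]
    exact step_even (by omega) (by omega) h1

lemma easy {d : ℕ} (X : Fin (2*d+1) → Type) [∀ i, Nonempty (X i)]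
    (φ : (∀ i, X i) → Prop) :
    ∀ f, f < d → ∀ s : ∀ i, CanA X i,
      (∀ i : Fin (2*d+1), (i : ℕ) < 2*d-(2*f+1) → ∀ j', (s i).2 j' = true) →
      AltTrue (2*d+1) X φ (2*d-(2*f+1)) (fun i => (s i).1) →
      ∃ t : ∀ i', CanA X i', (∀ k, k < (⟨2*d-(2*f+1), by omega⟩ : Fin (2*d+1)) → t k = s k) ∧
        ∀ u : ∀ i', CanA X i', (∀ k, k ≤ (⟨2*d-(2*f+1), by omega⟩ : Fin (2*d+1)) → u k = t k) →
          ¬ (¬ canGamma X φ u ∧ ∀ e ≤ f, ∀ j, ¬ Resp (canGamma X φ) e j u) := by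
  intro f
  induction f with
  | zero =>
    intro hf s hq hA
    obtain ⟨t, h1, h2⟩ := dev X φ (2*d-(2*0+1)) (by omega) (by omega) s hq hA
    refine ⟨t, h1, ?_⟩
    rintro u hu ⟨hngu, -⟩
    obtain ⟨hqu, hAu⟩ := h2 u hu
    refine hngu ⟨?_, ?_⟩
    · rwa [alt_ge (by omega)] at hAu
    · intro i j'
      exact hqu i (by have := i.isLt; omega) j'
  | succ g ihg =>
    intro hf s hq hA
    obtain ⟨t, h1, h2⟩ := dev X φ (2*d-(2*(g+1)+1)) (by omega) (by omega) s hq hA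
    refine ⟨t, h1, ?_⟩
    rintro u hu ⟨hngu, hnru⟩
    obtain ⟨hqu, hAu⟩ := h2 u hu
    have hpq : 2*d-(2*(g+1)+1) + 2 = 2*d-(2*g+1) := by omega
    rw [hpq] at hqu hAu
    obtain ⟨t', h1', h2'⟩ := ihg (by omega) u hqu hAu
    have hR : Resp (canGamma X φ) (g+1) ⟨2*d-(2*g+1), by omega⟩ u :=
      resp_succ.mpr ⟨⟨hngu, fun e he j => hnru e (by omega) j⟩, t', h1', h2'⟩
    exact hnru (g+1) le_rfl _ hR

open Classical in
lemma main_gap {d : ℕ} (X : Fin (2*d+1) → Type) [∀ i, Nonempty (X i)]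
    (φ : (∀ i, X i) → Prop) :
    ∀ e : ℕ, ∀ s : ∀ i, CanA X i,
      e + 1 ≤ (Finset.univ.filter (fun i : Fin (2*d+1) => ∃ j0, (s i).2 j0 = false)).card
        + (if (∀ k, ¬ AltTrue (2*d+1) X φ k (fun i => (s i).1)) then 1 else 0) →
      ¬ canGamma X φ s ∧ ∀ e' ≤ e, ∀ j, ¬ Resp (canGamma X φ) e' j s := by
  intro e
  induction e using Nat.strong_induction_on with
  | _ e IH =>
  intro s hs
  have hng : ¬ canGamma X φ s := by
    rintro ⟨hg1, hg2⟩
    by_cases hc : ∀ k, ¬ AltTrue (2*d+1) X φ k (fun i => (s i).1)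
    · exact hc (2*d+1) ((alt_ge le_rfl).mpr hg1)
    · rw [if_neg hc] at hs
      have hcard : 0 < (Finset.univ.filter
          (fun i : Fin (2*d+1) => ∃ j0, (s i).2 j0 = false)).card := by omega
      obtain ⟨i, hi⟩ := Finset.card_pos.mp hcard
      obtain ⟨-, j0, hj0⟩ := Finset.mem_filter.mp hi
      rw [hg2 i j0] at hj0
      simp at hj0
  refine ⟨hng, ?_⟩
  intro e' he' j hresp
  cases e' with
  | zero => exact resp_zero.mp hresp
  | succ f =>
  obtain ⟨-, t, hta, htu⟩ := resp_succ.mp hresp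
  by_cases hcase : ((j : ℕ) % 2 = 1 ∧ ∀ k, ¬ AltTrue (2*d+1) X φ k (fun i => (s i).1))
  · obtain ⟨hjodd, hconf⟩ := hcase
    set x1 : ∀ i, X i := fun k => if (k : ℕ) ≤ (j : ℕ) then (t k).1 else (s k).1 with hx1
    have hx1s : ∀ k : Fin (2*d+1), (k : ℕ) < (j : ℕ) → x1 k = (s k).1 := by
      intro k hk
      simp only [hx1]
      rw [if_pos (le_of_lt hk), hta k (Fin.lt_def.mpr hk)]
    have hnAj : ¬ AltTrue (2*d+1) X φ (j : ℕ) x1 := by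
      intro hA
      exact hconf (j : ℕ) (alt_congr (fun k hk => hx1s k hk) hA)
    have hnAj1 := step_odd j.isLt hjodd hnAj
    obtain ⟨y, hy1, hy2⟩ := ext_lemma (A := X) (2*d+1) ((j : ℕ)+1) (by omega) x1 hnAj1
    set u : ∀ i, CanA X i :=
      fun k => if (k : ℕ) ≤ (j : ℕ) then t k else ((y k, fun _ => false) : CanA X k) with hudef
    have huagree : ∀ k, k ≤ j → u k = t k := by
      intro k hk
      simp only [hudef]
      exact if_pos (Fin.le_def.mp hk)
    have hugt : ∀ k : Fin (2*d+1), j < k → ∀ j'', (u k).2 j'' = false := by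
      intro k hk j''
      have hk' : ¬ ((k : ℕ) ≤ (j : ℕ)) := not_le.mpr (Fin.lt_def.mp hk)
      simp only [hudef]
      exact congrArg (fun p : CanA X k => p.2 j'') (if_neg hk' : _ = ((y k, fun _ => false) : CanA X k))
    have hufst : (fun i => (u i).1) = y := by
      funext k
      simp only [hudef]
      by_cases hk : (k : ℕ) ≤ (j : ℕ)
      · refine (congrArg Prod.fst (if_pos hk : _ = t k)).trans ?_; rw [hy1 k (by omega)]
        simp only [hx1]
        rw [if_pos hk]
      · exact congrArg Prod.fst (if_neg hk : _ = ((y k, fun _ => false) : CanA X k))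
    have hconfu : ∀ k, ¬ AltTrue (2*d+1) X φ k (fun i => (u i).1) := by
      rw [hufst]
      intro l
      by_cases hl : l ≤ (j : ℕ)
      · intro hA
        refine hconf l (alt_congr (x := y) ?_ hA)
        intro k hk
        rw [hy1 k (by omega)]
        exact hx1s k (by omega)
      · exact hy2 l (by omega)
    have h1 := Finset.card_le_card (count_sub s t u j hta huagree hugt)
    rw [if_pos hconf] at hs
    have hmu : f + 1 ≤
        (Finset.univ.filter (fun i : Fin (2*d+1) => ∃ j0, (u i).2 j0 = false)).card
        + (if (∀ k, ¬ AltTrue (2*d+1) X φ k (fun i => (u i).1)) then 1 else 0) := by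
      rw [if_pos hconfu]
      by_cases hj : j ∈ Finset.univ.filter (fun i : Fin (2*d+1) => ∃ j0, (s i).2 j0 = false)
      · rw [Finset.card_erase_of_mem hj] at h1; omega
      · rw [Finset.erase_eq_of_notMem hj] at h1; omega
    obtain ⟨hngu, hnru⟩ := IH f (by omega) u hmu
    exact htu u huagree ⟨hngu, hnru⟩
  · set u : ∀ i, CanA X i :=
      fun k => if (k : ℕ) ≤ (j : ℕ) then t k else (((s k).1, fun _ => false) : CanA X k) with hudef
    have huagree : ∀ k, k ≤ j → u k = t k := by
      intro k hk
      simp only [hudef]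
      exact if_pos (Fin.le_def.mp hk)
    have hugt : ∀ k : Fin (2*d+1), j < k → ∀ j'', (u k).2 j'' = false := by
      intro k hk j''
      have hk' : ¬ ((k : ℕ) ≤ (j : ℕ)) := not_le.mpr (Fin.lt_def.mp hk)
      simp only [hudef]
      exact congrArg (fun p : CanA X k => p.2 j'') (if_neg hk' : _ = (((s k).1, fun _ => false) : CanA X k))
    have h1 := Finset.card_le_card (count_sub s t u j hta huagree hugt)
    have hSbound : f + 1 ≤
        (Finset.univ.filter (fun i : Fin (2*d+1) => ∃ j0, (u i).2 j0 = false)).card := by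
      by_cases hodd : (j : ℕ) % 2 = 1
      · have hnconf : ¬ (∀ k, ¬ AltTrue (2*d+1) X φ k (fun i => (s i).1)) :=
          fun hc => hcase ⟨hodd, hc⟩
        rw [if_neg hnconf] at hs
        by_cases hj : j ∈ Finset.univ.filter (fun i : Fin (2*d+1) => ∃ j0, (s i).2 j0 = false)
        · rw [Finset.card_erase_of_mem hj] at h1; omega
        · rw [Finset.erase_eq_of_notMem hj] at h1; omega
      · have hjS : j ∉ Finset.univ.filter (fun i : Fin (2*d+1) => ∃ j0, (s i).2 j0 = false) := by
          intro hjS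
          obtain ⟨-, j0, -⟩ := Finset.mem_filter.mp hjS
          exact absurd j0.isLt (by omega)
        rw [Finset.erase_eq_of_notMem hjS] at h1
        have hs' : e + 1 ≤ (Finset.univ.filter
            (fun i : Fin (2*d+1) => ∃ j0, (s i).2 j0 = false)).card + 1 := by
          by_cases hc : ∀ k, ¬ AltTrue (2*d+1) X φ k (fun i => (s i).1)
          · rw [if_pos hc] at hs; omega
          · rw [if_neg hc] at hs; omega
        omega
    have hmu : f + 1 ≤
        (Finset.univ.filter (fun i : Fin (2*d+1) => ∃ j0, (u i).2 j0 = false)).card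
        + (if (∀ k, ¬ AltTrue (2*d+1) X φ k (fun i => (u i).1)) then 1 else 0) :=
      le_trans hSbound (Nat.le_add_right _ _)
    obtain ⟨hngu, hnru⟩ := IH f (by omega) u hmu
    exact htu u huagree ⟨hngu, hnru⟩
/-- The canonical mechanism `M(φ, x₁,…,x_{2d+1})` is `d`-gap-free if and only if
the closed quantified Boolean formula `∀x₁ ∃x₂ ∀x₃ … ∃x_{2d} ∀x_{2d+1} φ` is true. -/
theorem canonical_gapFree_iff_qbf {d : ℕ} (X : Fin (2*d+1) → Type)
    [∀ i, Nonempty (X i)] (φ : (∀ i, X i) → Prop) :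
    GapFree (canGamma X φ) d ↔ ∀ s₀ : ∀ i, X i, AltTrue (2*d+1) X φ 0 s₀ := by
  constructor
  · intro hgf
    by_contra hA0
    push_neg at hA0
    obtain ⟨s₀, hs₀⟩ := hA0
    obtain ⟨y, -, hy⟩ := ext_lemma (A := X) (2*d+1) 0 (by omega) s₀ hs₀
    set s : ∀ i, CanA X i := fun i => ((y i, fun _ => false) : CanA X i) with hsdef
    have hconf : ∀ k, ¬ AltTrue (2*d+1) X φ k (fun i => (s i).1) := by
      have hfst : (fun i => (s i).1) = y := rfl
      rw [hfst]
      exact fun k => hy k (Nat.zero_le k)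
    have hcard : d ≤ (Finset.univ.filter
        (fun i : Fin (2*d+1) => ∃ j0, (s i).2 j0 = false)).card := by
      have := Finset.card_le_card_of_injOn
        (s := (Finset.univ : Finset (Fin d)))
        (t := Finset.univ.filter (fun i : Fin (2*d+1) => ∃ j0, (s i).2 j0 = false))
        (fun a => (⟨2*(a:ℕ)+1, by omega⟩ : Fin (2*d+1)))
        (fun a _ => Finset.mem_filter.mpr ⟨Finset.mem_univ _,
          ⟨⟨0, by show 0 < (2*(a:ℕ)+1) % 2; omega⟩, rfl⟩⟩)
        (fun a _ b _ hab => by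
          have h2 : 2*(a:ℕ)+1 = 2*(b:ℕ)+1 := congrArg Fin.val hab
          exact Fin.ext (by omega))
      simpa using this
    have hmu := main_gap X φ d s (by rw [if_pos hconf]; omega)
    obtain ⟨d', hd', i, hr⟩ := hgf s hmu.1
    exact hmu.2 d' hd' i hr
  · intro hqbf s hns
    by_cases hd : d = 0
    · subst hd
      refine absurd ⟨?_, ?_⟩ hns
      · have h0 := hqbf (fun i => (s i).1)
        have h1 := step_even (n := 2*0+1) (by omega) (by omega) h0
        rwa [alt_ge (by omega)] at h1
      · intro i j'
        exact absurd j'.isLt (by have := i.isLt; omega)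
    · obtain ⟨m, rfl⟩ : ∃ m, d = m + 1 := ⟨d - 1, by omega⟩
      by_contra h
      push_neg at h
      have hA1 : AltTrue (2*(m+1)+1) X φ (2*(m+1)-(2*m+1)) (fun i => (s i).1) := by
        have h0 := hqbf (fun i => (s i).1)
        have h1 := step_even (by omega) (by omega) h0
        have he : 2*(m+1)-(2*m+1) = 1 := by omega
        rw [he]
        exact h1
      obtain ⟨t, h1, h2⟩ := easy X φ m (by omega) s
        (fun i hi j' => absurd j'.isLt (by omega)) hA1
      have hR : Resp (canGamma X φ) (m+1) ⟨2*(m+1)-(2*m+1), by omega⟩ s :=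
        resp_succ.mpr ⟨⟨hns, fun e he j => h e (by omega) j⟩, t, h1, h2⟩
      exact h (m+1) le_rfl _ hR
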